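/- Let A = (a_ij) be a symmetric m×m real matrix with nonnegative entries. The inequality min_{1≤i≤m} x_i ≤ ⟨Ax, x⟩ ≤ max_{1≤i≤m} x_i holds for all x ∈ S^{m-1} if and only if ∑_{i∈α} ∑_{j∈α} a_ij ≤ |α| for every subset α ⊆ {1,...,m}, with equality when α = {1,...,m} (i.e., ∑_{i,j=1}^m a_ij = m). -/

import Mathlib

open Finset

lemma qf_swap {m : ℕ} (A : Matrix (Fin m) (Fin m) ℝ) (hsym : A.IsSymm)
    (s t : Finset (Fin m)) : ∑ i ∈ s, ∑ j ∈ t, A i j = ∑ i ∈ t, ∑ j ∈ s, A i j := by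
  refine Finset.sum_comm.trans ?_
  exact Finset.sum_congr rfl fun i _ => Finset.sum_congr rfl fun j _ => hsym.apply i j

lemma qf_cross_id {m : ℕ} (A : Matrix (Fin m) (Fin m) ℝ) (hsym : A.IsSymm)
    {α β : Finset (Fin m)} (hab : α ⊆ β) :
    2 * (∑ i ∈ α, ∑ j ∈ β, A i j) =
      (∑ i ∈ α, ∑ j ∈ α, A i j) + (∑ i ∈ β, ∑ j ∈ β, A i j)
        - ∑ i ∈ β \ α, ∑ j ∈ β \ α, A i j := by
  have hβ : α ∪ β \ α = β := Finset.union_sdiff_of_subset hab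
  have hdisj : Disjoint α (β \ α) := Finset.disjoint_sdiff
  have e1 : ∀ s : Finset (Fin m), ∑ i ∈ s, ∑ j ∈ β, A i j
      = (∑ i ∈ s, ∑ j ∈ α, A i j) + ∑ i ∈ s, ∑ j ∈ β \ α, A i j := by
    intro s
    rw [← Finset.sum_add_distrib]
    exact Finset.sum_congr rfl fun i _ => by rw [← Finset.sum_union hdisj, hβ]
  have eo : ∑ i ∈ β, ∑ j ∈ β, A i j
      = (∑ i ∈ α, ∑ j ∈ β, A i j) + ∑ i ∈ β \ α, ∑ j ∈ β, A i j := by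
    rw [← Finset.sum_union hdisj, hβ]
  have e3 := qf_swap A hsym (β \ α) α
  have e4 := e1 α
  have e5 := e1 (β \ α)
  linarith

lemma qf_cross_le {m : ℕ} (A : Matrix (Fin m) (Fin m) ℝ) (hsym : A.IsSymm)
    (hpos : ∀ i j, 0 ≤ A i j)
    (hblock : ∀ α : Finset (Fin m), ∑ i ∈ α, ∑ j ∈ α, A i j ≤ (α.card : ℝ))
    {α β : Finset (Fin m)} (hab : α ⊆ β) :
    2 * (∑ i ∈ α, ∑ j ∈ β, A i j) ≤ (α.card : ℝ) + β.card := by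
  have h0 : (0:ℝ) ≤ ∑ i ∈ β \ α, ∑ j ∈ β \ α, A i j :=
    Finset.sum_nonneg fun i _ => Finset.sum_nonneg fun j _ => hpos i j
  have := qf_cross_id A hsym hab
  have h1 := hblock α
  have h2 := hblock β
  linarith

lemma qf_cross_ge {m : ℕ} (A : Matrix (Fin m) (Fin m) ℝ) (hsym : A.IsSymm)
    (hpos : ∀ i j, 0 ≤ A i j)
    (hblock : ∀ α : Finset (Fin m), ∑ i ∈ α, ∑ j ∈ α, A i j ≤ (α.card : ℝ))
    (htot : ∑ i, ∑ j, A i j = (m : ℝ)) (α : Finset (Fin m)) :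
    (α.card : ℝ) ≤ 2 * (∑ i ∈ α, ∑ j, A i j) := by
  have h0 : (0:ℝ) ≤ ∑ i ∈ α, ∑ j ∈ α, A i j :=
    Finset.sum_nonneg fun i _ => Finset.sum_nonneg fun j _ => hpos i j
  have hid := qf_cross_id A hsym (Finset.subset_univ α)
  have h1 := hblock (Finset.univ \ α)
  have hcard : α.card ≤ m := by
    simpa [Finset.card_univ] using Finset.card_le_card (Finset.subset_univ α)
  have hc : ((Finset.univ \ α).card : ℝ) = (m : ℝ) - α.card := by
    rw [Finset.card_sdiff_of_subset (Finset.subset_univ α), Finset.card_univ, Fintype.card_fin,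
      Nat.cast_sub hcard]
  rw [hc] at h1
  linarith

lemma Ico_eq_filter {m : ℕ} (k : ℕ) : Finset.Ico k m = (Finset.range m).filter (fun i => k ≤ i) := by
  ext i; simp only [Finset.mem_Ico, Finset.mem_filter, Finset.mem_range]; omega

lemma sum_Ico_eq_sum_tau {m : ℕ} (k : ℕ) (f : ℕ → ℝ) :
    ∑ i ∈ Finset.Ico k m, f i
      = ∑ i ∈ Finset.univ.filter (fun i : Fin m => k ≤ (i : ℕ)), f ↑i := by
  rw [Ico_eq_filter, Finset.sum_filter, Finset.sum_filter,
    ← Fin.sum_univ_eq_sum_range (fun i => if k ≤ i then f i else 0) m]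

lemma card_tau {m : ℕ} (k : ℕ) (hk : k < m) :
    (Finset.univ.filter (fun i : Fin m => k ≤ (i : ℕ))).card = m - k := by
  have : Finset.univ.filter (fun i : Fin m => k ≤ (i : ℕ)) = Finset.Ici (⟨k, hk⟩ : Fin m) := by
    ext i; simp [Fin.le_def]
  rw [this, Fin.card_Ici]

lemma qf_key (m : ℕ) (hm : 0 < m) (A : Matrix (Fin m) (Fin m) ℝ) (hsym : A.IsSymm)
    (hpos : ∀ i j, 0 ≤ A i j)
    (hblock : ∀ α : Finset (Fin m), ∑ i ∈ α, ∑ j ∈ α, A i j ≤ (α.card : ℝ))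
    (htot : ∑ i, ∑ j, A i j = (m : ℝ))
    (y : Fin m → ℝ) (hy : Monotone y) (hy0 : ∀ i, 0 ≤ y i) (hsum : ∑ i, y i = 1) :
    y ⟨0, hm⟩ ≤ (∑ i, ∑ j, A i j * y i * y j) ∧
      (∑ i, ∑ j, A i j * y i * y j) ≤ y ⟨m-1, by omega⟩ := by
  classical
  set z : ℕ → ℝ := fun n => y ⟨min n (m-1), by omega⟩ with hz
  set d : ℕ → ℝ := fun n => if n = 0 then z 0 else z n - z (n-1) with hd
  set a' : ℕ → ℕ → ℝ := fun i j => if h : i < m ∧ j < m then A ⟨i, h.1⟩ ⟨j, h.2⟩ else 0 with ha'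
  set τ : ℕ → Finset (Fin m) := fun k => Finset.univ.filter (fun i : Fin m => k ≤ (i : ℕ)) with hτ
  set B : ℕ → ℕ → ℝ := fun k l => ∑ i ∈ τ k, ∑ j ∈ τ l, A i j with hB
  -- basic facts
  have hz_mono : Monotone z := fun a b hab => hy (by simp [Fin.le_def]; omega)
  have hz_y : ∀ i : Fin m, z ↑i = y i := by
    intro i; simp only [hz]; congr 1; exact Fin.ext (by simp; omega)
  have ha'A : ∀ i j : Fin m, a' ↑i ↑j = A i j := by
    intro i j; simp only [ha', dif_pos (And.intro i.isLt j.isLt)]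
  have hd_nonneg : ∀ n, 0 ≤ d n := by
    intro n
    by_cases h : n = 0
    · simp [hd, h, hz]; exact hy0 _
    · simp only [hd, h, if_false, sub_nonneg]
      exact hz_mono (Nat.sub_le n 1)
  have hz_eq : ∀ n, z n = ∑ k ∈ Finset.range (n+1), d k := by
    intro n
    induction n with
    | zero => simp [hd]
    | succ n ih => rw [Finset.sum_range_succ, ← ih]; simp [hd]
  have hz_ite : ∀ i, i < m → z i = ∑ k ∈ Finset.range m, (if k ≤ i then d k else 0) := by
    intro i hi
    rw [← Finset.sum_filter, show (Finset.range m).filter (fun k => k ≤ i) = Finset.range (i+1) by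
      ext a; simp; omega, hz_eq]
  -- B facts
  have hB_nonneg : ∀ k l, 0 ≤ B k l := fun k l =>
    Finset.sum_nonneg fun i _ => Finset.sum_nonneg fun j _ => hpos i j
  have hB_symm : ∀ k l, B k l = B l k := fun k l => qf_swap A hsym _ _
  have hτ_sub : ∀ k l, k ≤ l → τ l ⊆ τ k := by
    intro k l hkl i hi
    simp only [hτ, Finset.mem_filter] at *
    exact ⟨hi.1, le_trans hkl hi.2⟩
  have hB_le : ∀ k l, k < m → l < m → 2 * B k l ≤ ((m-k : ℕ) : ℝ) + ((m-l : ℕ) : ℝ) := by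
    intro k l hk hl
    rcases le_total k l with h | h
    · have := qf_cross_le A hsym hpos hblock (hτ_sub k l h)
      rw [card_tau k hk, card_tau l hl] at this
      simp only [hB]
      rw [qf_swap A hsym]
      linarith
    · have := qf_cross_le A hsym hpos hblock (hτ_sub l k h)
      rw [card_tau k hk, card_tau l hl] at this
      simp only [hB]
      linarith
  have hτ0 : τ 0 = Finset.univ := by simp [hτ]
  have hB00 : B 0 0 = (m : ℝ) := by rw [hB]; simp only [hτ0]; exact htot
  have hB0_ge : ∀ l, l < m → ((m-l : ℕ) : ℝ) ≤ 2 * B 0 l := by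
    intro l hl
    have := qf_cross_ge A hsym hpos hblock htot (τ l)
    rw [card_tau l hl] at this
    simp only [hB, hτ0]
    rw [qf_swap A hsym]
    exact this
  -- the quadratic form in ℕ-indexed form
  set t : ℕ → ℕ → ℝ := fun k i => if k ≤ i then d k else 0 with ht
  have hQ1 : (∑ i, ∑ j, A i j * y i * y j)
      = ∑ i ∈ Finset.range m, ∑ j ∈ Finset.range m, a' i j * z i * z j := by
    rw [← Fin.sum_univ_eq_sum_range (fun i => ∑ j ∈ Finset.range m, a' i j * z i * z j) m]
    refine Finset.sum_congr rfl fun i _ => ?_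
    rw [← Fin.sum_univ_eq_sum_range (fun j => a' ↑i j * z ↑i * z j) m]
    exact Finset.sum_congr rfl fun j _ => by rw [ha'A, hz_y, hz_y]
  -- inner rearrangement for fixed i j
  have hstep1 : ∀ i ∈ Finset.range m, ∀ j ∈ Finset.range m,
      a' i j * z i * z j = ∑ k ∈ Finset.range m, ∑ l ∈ Finset.range m,
        (if k ≤ i then (if l ≤ j then d k * d l * a' i j else 0) else 0) := by
    intro i hi j hj
    rw [Finset.mem_range] at hi hj
    rw [hz_ite i hi, hz_ite j hj]
    rw [show (a' i j * (∑ k ∈ Finset.range m, if k ≤ i then d k else 0) *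
        (∑ l ∈ Finset.range m, if l ≤ j then d l else 0))
      = a' i j * ∑ k ∈ Finset.range m, ∑ l ∈ Finset.range m,
          ((if k ≤ i then d k else 0) * (if l ≤ j then d l else 0)) by
        rw [← Finset.sum_mul_sum]; ring]
    rw [Finset.mul_sum]
    refine Finset.sum_congr rfl fun k _ => ?_
    rw [Finset.mul_sum]
    refine Finset.sum_congr rfl fun l _ => ?_
    split_ifs <;> ring
  -- swap sums to the (k,l) outside form
  have hQ2 : (∑ i, ∑ j, A i j * y i * y j)
      = ∑ k ∈ Finset.range m, ∑ l ∈ Finset.range m, d k * d l * B k l := by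
    rw [hQ1, Finset.sum_congr rfl (fun i hi => Finset.sum_congr rfl (fun j hj =>
      hstep1 i hi j hj))]
    rw [Finset.sum_congr rfl (fun i _ => Finset.sum_comm)]
    rw [Finset.sum_comm]
    refine Finset.sum_congr rfl fun k _ => ?_
    rw [Finset.sum_congr rfl (fun i _ => Finset.sum_comm), Finset.sum_comm]
    refine Finset.sum_congr rfl fun l _ => ?_
    -- now goal: ∑ i ∑ j ite ... = d k * d l * B k l
    have e1 : ∀ i ∈ Finset.range m,
        (∑ j ∈ Finset.range m, (if k ≤ i then (if l ≤ j then d k * d l * a' i j else 0) else 0))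
        = (if k ≤ i then (∑ j ∈ Finset.Ico l m, d k * d l * a' i j) else 0) := by
      intro i _
      by_cases h : k ≤ i
      · simp only [h, if_true]
        rw [Ico_eq_filter, Finset.sum_filter]
      · simp [h]
    rw [Finset.sum_congr rfl e1, ← Finset.sum_filter, ← Ico_eq_filter]
    have e2 : B k l = ∑ i ∈ Finset.Ico k m, ∑ j ∈ Finset.Ico l m, a' i j := by
      rw [sum_Ico_eq_sum_tau k (fun i => ∑ j ∈ Finset.Ico l m, a' i j)]
      refine Finset.sum_congr rfl fun i _ => ?_
      rw [sum_Ico_eq_sum_tau l (fun j => a' ↑i j)]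
      exact Finset.sum_congr rfl fun j _ => (ha'A i j).symm
    rw [e2]
    simp only [Finset.mul_sum]
  -- weighted sum of d equals 1
  set c : ℕ → ℝ := fun k => ((m - k : ℕ) : ℝ) with hc
  have hW : ∑ k ∈ Finset.range m, c k * d k = 1 := by
    have h1 : ∑ i ∈ Finset.range m, z i = 1 := by
      rw [← Fin.sum_univ_eq_sum_range (fun i => z i) m, ← hsum]
      exact Finset.sum_congr rfl fun i _ => hz_y i
    calc ∑ k ∈ Finset.range m, c k * d k
        = ∑ k ∈ Finset.range m, ∑ i ∈ Finset.range m, (if k ≤ i then d k else 0) := by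
          refine Finset.sum_congr rfl fun k hk => ?_
          rw [← Finset.sum_filter, ← Ico_eq_filter, Finset.sum_const, Nat.card_Ico,
            nsmul_eq_mul]
      _ = ∑ i ∈ Finset.range m, ∑ k ∈ Finset.range m, (if k ≤ i then d k else 0) :=
          Finset.sum_comm
      _ = ∑ i ∈ Finset.range m, z i := by
          refine Finset.sum_congr rfl fun i hi => ?_
          rw [hz_ite i (Finset.mem_range.mp hi)]
      _ = 1 := h1
  have hD : ∑ k ∈ Finset.range m, d k = z (m - 1) := by
    rw [hz_eq (m-1), show m - 1 + 1 = m from by omega]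
  have hyM : y ⟨m-1, by omega⟩ = z (m-1) := (hz_y ⟨m-1, by omega⟩).symm
  have hy00 : y ⟨0, hm⟩ = z 0 := (hz_y ⟨0, hm⟩).symm
  have hd0 : d 0 = z 0 := by simp [hd]
  clear_value z d a' τ B c
  constructor
  · -- lower bound
    rw [hQ2, hy00, ← hd0]
    have hF_nonneg : ∀ k l, 0 ≤ d k * d l * B k l := fun k l =>
      mul_nonneg (mul_nonneg (hd_nonneg k) (hd_nonneg l)) (hB_nonneg k l)
    have split1 : ∑ k ∈ Finset.range m, ∑ l ∈ Finset.range m, d k * d l * B k l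
        = (∑ l ∈ Finset.range m, d 0 * d l * B 0 l)
          + ∑ k ∈ Finset.Ico 1 m, ∑ l ∈ Finset.range m, d k * d l * B k l := by
      rw [Finset.range_eq_Ico, Finset.sum_eq_sum_Ico_succ_bot hm]
    have split2 : ∑ l ∈ Finset.range m, d 0 * d l * B 0 l
        = d 0 * d 0 * B 0 0 + ∑ l ∈ Finset.Ico 1 m, d 0 * d l * B 0 l := by
      rw [Finset.range_eq_Ico, Finset.sum_eq_sum_Ico_succ_bot hm]
    have hFk : ∑ k ∈ Finset.Ico 1 m, d k * d 0 * B k 0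
        ≤ ∑ k ∈ Finset.Ico 1 m, ∑ l ∈ Finset.range m, d k * d l * B k l := by
      refine Finset.sum_le_sum fun k _ => ?_
      exact Finset.single_le_sum (fun l _ => hF_nonneg k l) (Finset.mem_range.mpr hm)
    have hsum1 : ∑ l ∈ Finset.Ico 1 m, (c l * d l) * (d 0 / 2)
        ≤ ∑ l ∈ Finset.Ico 1 m, d 0 * d l * B 0 l := by
      refine Finset.sum_le_sum fun l hl => ?_
      have hl' : l < m := (Finset.mem_Ico.mp hl).2
      have h1 := hB0_ge l hl'
      have h2 : 0 ≤ d 0 * d l := mul_nonneg (hd_nonneg 0) (hd_nonneg l)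
      have hcl : c l = ((m - l : ℕ) : ℝ) := by rw [hc]
      rw [hcl]
      nlinarith [h1, h2]
    have hsum2 : ∑ k ∈ Finset.Ico 1 m, (c k * d k) * (d 0 / 2)
        ≤ ∑ k ∈ Finset.Ico 1 m, d k * d 0 * B k 0 := by
      refine Finset.sum_le_sum fun k hk => ?_
      have hk' : k < m := (Finset.mem_Ico.mp hk).2
      have h1 := hB0_ge k hk'
      have h2 : 0 ≤ d 0 * d k := mul_nonneg (hd_nonneg 0) (hd_nonneg k)
      have h3 : B k 0 = B 0 k := hB_symm k 0
      have hck : c k = ((m - k : ℕ) : ℝ) := by rw [hc]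
      rw [hck, h3]
      nlinarith [h1, h2]
    have htail : ∑ l ∈ Finset.Ico 1 m, c l * d l = 1 - c 0 * d 0 := by
      have h := hW
      rw [Finset.range_eq_Ico, Finset.sum_eq_sum_Ico_succ_bot hm] at h
      linarith
    have hsum1' : ∑ l ∈ Finset.Ico 1 m, (c l * d l) * (d 0 / 2)
        = (1 - c 0 * d 0) * (d 0 / 2) := by rw [← Finset.sum_mul, htail]
    have hc0 : c 0 = (m : ℝ) := by simp [hc]
    have hB00sub : d 0 * d 0 * B 0 0 = d 0 * d 0 * (m : ℝ) := by rw [hB00]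
    have hc0sub : (1 - c 0 * d 0) * (d 0 / 2) = (1 - (m : ℝ) * d 0) * (d 0 / 2) := by
      rw [hc0]
    have hnl : d 0 * d 0 * (m : ℝ)
        + ((1 - (m : ℝ) * d 0) * (d 0 / 2) + (1 - (m : ℝ) * d 0) * (d 0 / 2)) = d 0 := by
      ring
    linarith [split1, split2, hFk, hsum1, hsum2, hsum1', hB00sub, hc0sub, hnl]
  · -- upper bound
    rw [hQ2, hyM, ← hD]
    have step : ∑ k ∈ Finset.range m, ∑ l ∈ Finset.range m, d k * d l * B k l
        ≤ ∑ k ∈ Finset.range m, ∑ l ∈ Finset.range m,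
            (d k * (c l * d l) * (1/2) + (c k * d k) * d l * (1/2)) := by
      refine Finset.sum_le_sum fun k hk => Finset.sum_le_sum fun l hl => ?_
      have hk' := Finset.mem_range.mp hk
      have hl' := Finset.mem_range.mp hl
      have h2 := hB_le k l hk' hl'
      have hdd : 0 ≤ d k * d l := mul_nonneg (hd_nonneg k) (hd_nonneg l)
      have hck : c k = ((m - k : ℕ) : ℝ) := by rw [hc]
      have hcl : c l = ((m - l : ℕ) : ℝ) := by rw [hc]
      rw [hck, hcl]
      nlinarith [hdd, h2]
    have rhs : ∑ k ∈ Finset.range m, ∑ l ∈ Finset.range m,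
            (d k * (c l * d l) * (1/2) + (c k * d k) * d l * (1/2))
        = ∑ k ∈ Finset.range m, d k := by
      have e1 : ∀ k, ∑ l ∈ Finset.range m,
          (d k * (c l * d l) * (1/2) + (c k * d k) * d l * (1/2))
          = (∑ l ∈ Finset.range m, d k * (c l * d l)) * (1/2)
            + (∑ l ∈ Finset.range m, (c k * d k) * d l) * (1/2) := fun k => by
        rw [Finset.sum_add_distrib, Finset.sum_mul, Finset.sum_mul]
      rw [Finset.sum_congr rfl (fun k _ => e1 k), Finset.sum_add_distrib,
        ← Finset.sum_mul, ← Finset.sum_mul,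
        ← Finset.sum_mul_sum (Finset.range m) (Finset.range m) d (fun l => c l * d l),
        ← Finset.sum_mul_sum (Finset.range m) (Finset.range m) (fun k => c k * d k) d,
        hW]
      ring
    linarith [step, rhs.le, rhs.ge]

lemma qf_eval {m : ℕ} (A : Matrix (Fin m) (Fin m) ℝ) (α : Finset (Fin m)) (c : ℝ) :
    (∑ i, ∑ j, A i j * (if i ∈ α then c else 0) * (if j ∈ α then c else 0))
      = (∑ i ∈ α, ∑ j ∈ α, A i j) * (c * c) := by
  have e1 : ∀ i j : Fin m, A i j * (if i ∈ α then c else 0) * (if j ∈ α then c else 0)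
      = if i ∈ α then (if j ∈ α then A i j * (c * c) else 0) else 0 := by
    intro i j; split_ifs <;> ring
  simp only [e1]
  have e2 : ∀ i : Fin m, (∑ j : Fin m, if i ∈ α then if j ∈ α then A i j * (c*c) else 0 else 0)
      = if i ∈ α then ∑ j ∈ α, A i j * (c*c) else 0 := by
    intro i
    by_cases hi : i ∈ α
    · simp only [hi, if_true]
      rw [Finset.sum_ite_mem, Finset.univ_inter]
    · simp [hi]
  rw [Finset.sum_congr rfl (fun i _ => e2 i), Finset.sum_ite_mem, Finset.univ_inter,
    Finset.sum_mul]
  refine Finset.sum_congr rfl fun i _ => ?_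
  rw [Finset.sum_mul]

theorem quadratic_form_between_min_max_iff (m : ℕ) (hm : 0 < m)
    (A : Matrix (Fin m) (Fin m) ℝ) (hsym : A.IsSymm) (hpos : ∀ i j, 0 ≤ A i j) :
    (∀ x ∈ stdSimplex ℝ (Fin m),
        Finset.univ.inf' (Finset.univ_nonempty_iff.mpr ⟨⟨0, hm⟩⟩) x ≤
            ∑ i, ∑ j, A i j * x i * x j ∧
          ∑ i, ∑ j, A i j * x i * x j ≤
            Finset.univ.sup' (Finset.univ_nonempty_iff.mpr ⟨⟨0, hm⟩⟩) x) ↔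
      ((∀ α : Finset (Fin m), ∑ i ∈ α, ∑ j ∈ α, A i j ≤ (α.card : ℝ)) ∧
        ∑ i, ∑ j, A i j = (m : ℝ)) := by
  constructor
  · intro h
    have main : ∀ α : Finset (Fin m), α.Nonempty →
        ((∑ i ∈ α, ∑ j ∈ α, A i j) * (((α.card : ℝ))⁻¹ * ((α.card : ℝ))⁻¹) ≤ ((α.card : ℝ))⁻¹
          ∧ (α = Finset.univ → ((α.card : ℝ))⁻¹
              ≤ (∑ i ∈ α, ∑ j ∈ α, A i j) * (((α.card : ℝ))⁻¹ * ((α.card : ℝ))⁻¹))) := by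
      intro α hα
      set c : ℝ := ((α.card : ℝ))⁻¹ with hc
      have hcard : 0 < (α.card : ℝ) := by exact_mod_cast Finset.card_pos.mpr hα
      have hc0 : 0 < c := inv_pos.mpr hcard
      set x : Fin m → ℝ := fun i => if i ∈ α then c else 0 with hxdef
      have hx : x ∈ stdSimplex ℝ (Fin m) := by
        constructor
        · intro i
          simp only [hxdef]
          split_ifs
          · exact hc0.le
          · exact le_refl 0
        · simp only [hxdef]
          rw [Finset.sum_ite_mem, Finset.univ_inter, Finset.sum_const, nsmul_eq_mul]
          exact mul_inv_cancel₀ hcard.ne'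
      have hQ : ∑ i, ∑ j, A i j * x i * x j = (∑ i ∈ α, ∑ j ∈ α, A i j) * (c * c) := by
        simp only [hxdef]
        exact qf_eval A α c
      constructor
      · have h2 := (h x hx).2
        have hsup : Finset.univ.sup' (Finset.univ_nonempty_iff.mpr ⟨⟨0, hm⟩⟩) x ≤ c := by
          refine Finset.sup'_le _ _ fun i _ => ?_
          simp only [hxdef]
          split_ifs
          · exact le_refl c
          · exact hc0.le
        rw [hQ] at h2
        exact le_trans h2 hsup
      · intro hαu
        have h1 := (h x hx).1
        have hinf : c ≤ Finset.univ.inf' (Finset.univ_nonempty_iff.mpr ⟨⟨0, hm⟩⟩) x := by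
          refine Finset.le_inf' _ _ fun i _ => ?_
          simp only [hxdef]
          rw [if_pos (hαu ▸ Finset.mem_univ i)]
        rw [hQ] at h1
        exact le_trans hinf h1
    constructor
    · intro α
      rcases α.eq_empty_or_nonempty with rfl | hα
      · simp
      · have hcard : 0 < (α.card : ℝ) := by exact_mod_cast Finset.card_pos.mpr hα
        have h1 := (main α hα).1
        have hne : ((α.card : ℝ)) ≠ 0 := hcard.ne'
        have h3 := mul_le_mul_of_nonneg_left h1 (mul_nonneg hcard.le hcard.le)
        have e : ((α.card : ℝ) * (α.card : ℝ))
            * ((∑ i ∈ α, ∑ j ∈ α, A i j) * (((α.card : ℝ))⁻¹ * ((α.card : ℝ))⁻¹))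
            = ∑ i ∈ α, ∑ j ∈ α, A i j := by field_simp
        have e2 : ((α.card : ℝ) * (α.card : ℝ)) * ((α.card : ℝ))⁻¹ = (α.card : ℝ) := by
          field_simp
        rw [e, e2] at h3
        exact h3
    · have hαu : (Finset.univ : Finset (Fin m)).Nonempty := ⟨⟨0, hm⟩, Finset.mem_univ _⟩
      have h1 := (main Finset.univ hαu).1
      have h2 := (main Finset.univ hαu).2 rfl
      have hcm : ((Finset.univ : Finset (Fin m)).card : ℝ) = (m : ℝ) := by
        rw [Finset.card_univ, Fintype.card_fin]
      have hm' : 0 < (m : ℝ) := by exact_mod_cast hm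
      rw [hcm] at h1 h2
      have heq : (∑ i, ∑ j, A i j) * ((m : ℝ)⁻¹ * (m : ℝ)⁻¹) = (m : ℝ)⁻¹ := le_antisymm h1 h2
      have hne : ((m : ℝ)⁻¹ * (m : ℝ)⁻¹) ≠ 0 := by positivity
      have e3 : ∑ i, ∑ j, A i j
          = ((∑ i, ∑ j, A i j) * ((m : ℝ)⁻¹ * (m : ℝ)⁻¹)) * ((m : ℝ) * m) := by
        rw [mul_assoc, ← mul_inv, inv_mul_cancel₀ (by positivity), mul_one]
      rw [e3, heq, ← mul_assoc, inv_mul_cancel₀ hm'.ne', one_mul]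
  · rintro ⟨hblock, htot⟩ x hx
    set σ := Tuple.sort x with hσ
    set y : Fin m → ℝ := x ∘ σ with hy'
    have hy : Monotone y := Tuple.monotone_sort x
    have hy0 : ∀ i, 0 ≤ y i := fun i => hx.1 _
    have hsum : ∑ i, y i = 1 := by
      rw [hy']
      rw [show ∑ i, (x ∘ σ) i = ∑ i, x (σ i) from rfl, Equiv.sum_comp σ x]
      exact hx.2
    set A' : Matrix (Fin m) (Fin m) ℝ := Matrix.of (fun i j => A (σ i) (σ j)) with hA'
    have hsym' : A'.IsSymm := by
      ext i j
      simp only [hA', Matrix.transpose_apply, Matrix.of_apply]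
      exact hsym.apply (σ i) (σ j)
    have hpos' : ∀ i j, 0 ≤ A' i j := fun i j => hpos _ _
    have hblock' : ∀ α : Finset (Fin m), ∑ i ∈ α, ∑ j ∈ α, A' i j ≤ (α.card : ℝ) := by
      intro α
      have e : ∑ i ∈ α, ∑ j ∈ α, A' i j = ∑ i ∈ α.image σ, ∑ j ∈ α.image σ, A i j := by
        rw [Finset.sum_image (fun a _ b _ hab => σ.injective hab)]
        refine Finset.sum_congr rfl fun i _ => ?_
        rw [Finset.sum_image (fun a _ b _ hab => σ.injective hab)]
        exact Finset.sum_congr rfl fun j _ => rfl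
      rw [e, ← Finset.card_image_of_injective α σ.injective]
      exact hblock (α.image σ)
    have htot' : ∑ i, ∑ j, A' i j = (m : ℝ) := by
      have e : ∑ i, ∑ j, A' i j = ∑ i, ∑ j, A i j := by
        rw [show ∑ i, ∑ j, A' i j = ∑ i, ∑ j, A (σ i) (σ j) from rfl]
        rw [Finset.sum_congr rfl (fun i _ => Equiv.sum_comp σ (fun j => A (σ i) j))]
        exact Equiv.sum_comp σ (fun i => ∑ j, A i j)
      rw [e]; exact htot
    have key := qf_key m hm A' hsym' hpos' hblock' htot' y hy hy0 hsum
    have hQeq : ∑ i, ∑ j, A' i j * y i * y j = ∑ i, ∑ j, A i j * x i * x j := by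
      rw [show ∑ i, ∑ j, A' i j * y i * y j
          = ∑ i, ∑ j, A (σ i) (σ j) * x (σ i) * x (σ j) from rfl]
      rw [Finset.sum_congr rfl (fun i _ => Equiv.sum_comp σ (fun j => A (σ i) j * x (σ i) * x j))]
      exact Equiv.sum_comp σ (fun i => ∑ j, A i j * x i * x j)
    have hinf : Finset.univ.inf' (Finset.univ_nonempty_iff.mpr ⟨⟨0, hm⟩⟩) x = y ⟨0, hm⟩ := by
      refine le_antisymm ?_ ?_
      · exact Finset.inf'_le _ (Finset.mem_univ (σ ⟨0, hm⟩))
      · refine Finset.le_inf' _ _ fun i _ => ?_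
        have : x i = y (σ.symm i) := by simp [hy']
        rw [this]
        exact hy (by simp [Fin.le_def])
    have hsup : Finset.univ.sup' (Finset.univ_nonempty_iff.mpr ⟨⟨0, hm⟩⟩) x
        = y ⟨m - 1, by omega⟩ := by
      refine le_antisymm ?_ ?_
      · refine Finset.sup'_le _ _ fun i _ => ?_
        have : x i = y (σ.symm i) := by simp [hy']
        rw [this]
        refine hy ?_
        simp only [Fin.le_def]
        omega
      · exact Finset.le_sup' _ (Finset.mem_univ (σ ⟨m - 1, by omega⟩))
    rw [hinf, hsup, ← hQeq]
    exact key
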